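/- Let f : 𝔻 → 𝔻 be a holomorphic function and let σ ∈ ∂𝔻. Assume f has finite angular derivative at σ and the non-tangential limit f(σ) lies in ∂𝔻. Then ∠lim_{ζ→σ} Ω^𝔻_σ(ζ)/Ω^𝔻_{f(σ)}(f(ζ)) = |f'(σ)|, where for τ ∈ ∂𝔻 the Poisson kernel of the disc is Ω^𝔻_τ(ζ) = −(1−|ζ|²)/|τ−ζ|². -/

import Mathlib

open Filter Topology Metric Set

noncomputable section

/-- `ℂⁿ` as a complex Euclidean space. -/
abbrev En (n : ℕ) := EuclideanSpace ℂ (Fin n)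

/-- The open unit disc in `ℂ`. -/
def unitDisc : Set ℂ := Metric.ball 0 1

/-- The Poincaré distance on the unit disc, normalized as
`ρ(ζ₁,ζ₂) = log((1+m)/(1−m))` with `m = |ζ₁−ζ₂|/|1−conj(ζ₂)ζ₁|`. -/
def poincareDist (ζ₁ ζ₂ : ℂ) : ℝ :=
  Real.log ((1 + ‖ζ₁ - ζ₂‖ / ‖1 - (starRingEnd ℂ) ζ₂ * ζ₁‖) /
    (1 - ‖ζ₁ - ζ₂‖ / ‖1 - (starRingEnd ℂ) ζ₂ * ζ₁‖))

/-- The (one-disc) Kobayashi distance of a (convex) domain `D`. -/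
def kob {E : Type*} [NormedAddCommGroup E] [NormedSpace ℂ E] (D : Set E) (z w : E) : ℝ :=
  sInf { c | ∃ φ : ℂ → E, DifferentiableOn ℂ φ unitDisc ∧ MapsTo φ unitDisc D ∧
    ∃ ζ₁ ∈ unitDisc, ∃ ζ₂ ∈ unitDisc, φ ζ₁ = z ∧ φ ζ₂ = w ∧ c = poincareDist ζ₁ ζ₂ }

/-- A `ℂ`-proper convex domain: nonempty, open, convex, containing no complex affine line. -/
def IsCProperConvex {E : Type*} [NormedAddCommGroup E] [NormedSpace ℂ E] (D : Set E) : Prop :=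
  D.Nonempty ∧ IsOpen D ∧ Convex ℝ D ∧ ¬ ∃ z v : E, v ≠ 0 ∧ ∀ ζ : ℂ, z + ζ • v ∈ D

/-- A complex geodesic of `D`: a holomorphic isometry from the Poincaré disc into `D`. -/
def IsComplexGeodesic {E : Type*} [NormedAddCommGroup E] [NormedSpace ℂ E]
    (D : Set E) (φ : ℂ → E) : Prop :=
  DifferentiableOn ℂ φ unitDisc ∧ MapsTo φ unitDisc D ∧
    ∀ ζ₁ ∈ unitDisc, ∀ ζ₂ ∈ unitDisc, kob D (φ ζ₁) (φ ζ₂) = poincareDist ζ₁ ζ₂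

/-- `φ` has endpoint `ξ`: `φ(t) → ξ` as `t → 1⁻` along the real axis. -/
def HasEndpoint {E : Type*} [NormedAddCommGroup E] [NormedSpace ℂ E]
    (φ : ℂ → E) (ξ : E) : Prop :=
  Tendsto (fun t : ℝ => φ (t : ℂ)) (𝓝[<] (1 : ℝ)) (𝓝 ξ)

/-- The standard Hermitian product `⟨z,w⟩ = Σ_j z_j conj(w_j)` on `ℂⁿ`. -/
def herm {n : ℕ} (z w : En n) : ℂ := ∑ j, z j * (starRingEnd ℂ) (w j)

/-- The Stolz region at `σ ∈ ∂𝔻` with aperture `M`. -/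
def stolzAt (σ : ℂ) (M : ℝ) : Set ℂ :=
  {ζ ∈ unitDisc | ‖σ - ζ‖ < M * (1 - ‖ζ‖)}

/-- Non-tangential (angular) limit of `g` at `σ ∈ ∂𝔻`: limit within every Stolz region. -/
def NTLim {α : Type*} [TopologicalSpace α] (g : ℂ → α) (σ : ℂ) (a : α) : Prop :=
  ∀ M : ℝ, 1 < M → Tendsto g (𝓝[stolzAt σ M] σ) (𝓝 a)

/-- `ξ ∈ ∂D` is a point of locally finite type: near `ξ` the boundary is `C^L`-smooth
(with a `C^L` local defining function with nonvanishing differential) and the order of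
vanishing of the defining function along every complex line through a nearby boundary
point is at most `L`. -/
def IsLocallyFiniteType {n : ℕ} (D : Set (En n)) (ξ : En n) : Prop :=
  ξ ∈ frontier D ∧ ∃ L : ℕ, 2 ≤ L ∧ ∃ U : Set (En n), IsOpen U ∧ ξ ∈ U ∧
    ∃ r : En n → ℝ, ContDiffOn ℝ L r U ∧ (∀ x ∈ U, (x ∈ D ↔ r x < 0)) ∧
      (∀ x ∈ frontier D ∩ U, fderiv ℝ r x ≠ 0) ∧
      (∀ η ∈ frontier D ∩ U, ∀ v : En n, v ≠ 0 →
        ¬ (fun ζ : ℂ => r (η + ζ • v)) =o[𝓝 (0 : ℂ)] fun ζ : ℂ => ‖ζ‖ ^ L)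

/-- `nor` is the outer unit normal of the convex domain `D` at `ξ ∈ ∂D`:
a unit vector whose associated real supporting hyperplane at `ξ` keeps `D` strictly
on its negative side. -/
def IsOuterUnitNormal {n : ℕ} (D : Set (En n)) (ξ nor : En n) : Prop :=
  ‖nor‖ = 1 ∧ ∀ z ∈ D, (herm (z - ξ) nor).re < 0

/-- `Ω` is the pluricomplex Poisson kernel of `D` at `ξ` (with outer unit normal `nor`):
`Ω(z) = −1/φ'_N(1)` for any complex geodesic `φ` with `φ(0) = z` and endpoint `ξ`, where
`φ'_N(1)` is the non-tangential limit of `⟨φ'(ζ), n_ξ⟩` at `1`. -/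
def IsPoissonKernel {n : ℕ} (D : Set (En n)) (ξ nor : En n) (Ω : En n → ℝ) : Prop :=
  ∀ z ∈ D, ∀ φ : ℂ → En n, IsComplexGeodesic D φ → φ 0 = z → HasEndpoint φ ξ →
    ∀ a : ℝ, 0 < a → NTLim (fun ζ => herm (deriv φ ζ) nor) 1 (a : ℂ) → Ω z = -1 / a

/-- `h` is the horofunction of `D` with center `ξ` and base-point `p`:
`h(z) = lim_{w→ξ} [k_D(z,w) − k_D(w,p)]`. -/
def IsHorofunction {n : ℕ} (D : Set (En n)) (ξ p : En n) (h : En n → ℝ) : Prop :=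
  ∀ z ∈ D, Tendsto (fun w => kob D z w - kob D w p) (𝓝[D] ξ) (𝓝 (h z))

/-- Euclidean distance to the boundary of `D`. -/
def deltaD {E : Type*} [NormedAddCommGroup E] [NormedSpace ℂ E] (D : Set E) (z : E) : ℝ :=
  Metric.infDist z (frontier D)

open Complex ComplexConjugate

def Complex.abs : AbsoluteValue ℂ ℝ := NormedField.toAbsoluteValue ℂ

lemma Complex.norm_eq_abs (z : ℂ) : ‖z‖ = Complex.abs z := rfl

lemma Complex.abs_conj (z : ℂ) : Complex.abs (conj z) = Complex.abs z := Complex.norm_conj z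

lemma Complex.abs_ofReal (r : ℝ) : Complex.abs (r : ℂ) = |r| := Complex.norm_real r

lemma Complex.sq_abs (z : ℂ) : Complex.abs z ^ 2 = normSq z := Complex.sq_norm z

lemma Complex.abs_re_le_abs (z : ℂ) : |z.re| ≤ Complex.abs z := Complex.abs_re_le_norm z

lemma Complex.continuous_abs : Continuous Complex.abs := continuous_norm


def mob (a z : ℂ) : ℂ := (a - z) / (1 - conj a * z)

lemma den_ne {a z : ℂ} (ha : Complex.abs a < 1) (hz : Complex.abs z ≤ 1) :
    1 - conj a * z ≠ 0 := by
  intro h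
  have h1 : conj a * z = 1 := by linear_combination -h
  have : Complex.abs (conj a * z) = 1 := by rw [h1, map_one]
  rw [map_mul, abs_conj] at this
  nlinarith [Complex.abs.nonneg z, Complex.abs.nonneg a]

lemma normSq_key (a z : ℂ) :
    normSq (1 - conj a * z) - normSq (a - z) = (1 - normSq a) * (1 - normSq z) := by
  simp only [normSq_apply, Complex.sub_re, Complex.sub_im, Complex.mul_re, Complex.mul_im,
    Complex.one_re, Complex.one_im, Complex.conj_re, Complex.conj_im]
  ring

lemma mob_mem {a z : ℂ} (ha : Complex.abs a < 1) (hz : Complex.abs z < 1) :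
    Complex.abs (mob a z) < 1 := by
  have hden := den_ne ha hz.le
  have h0 : Complex.abs (1 - conj a * z) > 0 := by
    simpa [AbsoluteValue.pos_iff] using hden
  have hlt : normSq (a - z) < normSq (1 - conj a * z) := by
    have := normSq_key a z
    have h1 : normSq a < 1 := by rw [← sq_abs]; nlinarith [Complex.abs.nonneg a]
    have h2 : normSq z < 1 := by rw [← sq_abs]; nlinarith [Complex.abs.nonneg z]
    nlinarith
  rw [mob, map_div₀, div_lt_one h0]
  have := Complex.sq_abs (a - z)
  have := Complex.sq_abs (1 - conj a * z)
  nlinarith [Complex.abs.nonneg (a - z), h0]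

lemma mob_self (a : ℂ) : mob a a = 0 := by simp [mob]

lemma mob_mob {a z : ℂ} (ha : Complex.abs a < 1) (hz : Complex.abs z < 1) :
    mob a (mob a z) = z := by
  have h1 := den_ne ha hz.le
  have h2 := den_ne ha (mob_mem ha hz).le
  have hne : 1 - a * conj a ≠ 0 := by
    intro h
    have h1' : a * conj a = 1 := by linear_combination -h
    have := congrArg Complex.abs h1'
    rw [map_mul, abs_conj, map_one] at this
    nlinarith [Complex.abs.nonneg a]
  simp only [mob] at h2 ⊢
  field_simp at h2 ⊢
  have hinv : (1 - a * conj a) * (1 - a * conj a)⁻¹ = 1 := mul_inv_cancel₀ hne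
  linear_combination z * hinv

lemma mob_diff {a : ℂ} (ha : Complex.abs a < 1) :
    DifferentiableOn ℂ (mob a) (ball 0 1) := by
  apply DifferentiableOn.div
  · exact (differentiable_const a).sub differentiable_id |>.differentiableOn
  · exact ((differentiable_const (1:ℂ)).sub ((differentiable_const _).mul differentiable_id)).differentiableOn
  · intro z hz
    exact den_ne ha (by simpa [Complex.norm_eq_abs] using (mem_ball_zero_iff.mp hz).le)

lemma mob_mapsTo {a : ℂ} (ha : Complex.abs a < 1) :
    MapsTo (mob a) (ball 0 1) (ball 0 1) := by
  intro z hz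
  rw [mem_ball_zero_iff] at hz ⊢
  simpa [Complex.norm_eq_abs] using mob_mem ha (by simpa [Complex.norm_eq_abs] using hz)

/-- Schwarz–Pick inequality. -/
lemma schwarz_pick {f : ℂ → ℂ} (hf : DifferentiableOn ℂ f (ball 0 1))
    (hfm : MapsTo f (ball 0 1) (ball 0 1)) {z w : ℂ}
    (hz : Complex.abs z < 1) (hw : Complex.abs w < 1) :
    Complex.abs (f w - f z) * Complex.abs (1 - conj w * z) ≤
      Complex.abs (w - z) * Complex.abs (1 - conj (f w) * f z) := by
  have hzb : z ∈ ball (0:ℂ) 1 := by simpa [mem_ball_zero_iff, Complex.norm_eq_abs] using hz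
  have hwb : w ∈ ball (0:ℂ) 1 := by simpa [mem_ball_zero_iff, Complex.norm_eq_abs] using hw
  have hfw : Complex.abs (f w) < 1 := by
    simpa [mem_ball_zero_iff, Complex.norm_eq_abs] using hfm hwb
  have hfz : Complex.abs (f z) < 1 := by
    simpa [mem_ball_zero_iff, Complex.norm_eq_abs] using hfm hzb
  set g : ℂ → ℂ := fun ζ => mob (f w) (f (mob w ζ)) with hg
  have hgd : DifferentiableOn ℂ g (ball 0 1) := by
    apply DifferentiableOn.comp (mob_diff hfw) _ (fun ζ hζ => hfm (mob_mapsTo hw hζ))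
    exact DifferentiableOn.comp hf (mob_diff hw) (mob_mapsTo hw)
  have hgm : MapsTo g (ball 0 1) (ball 0 1) :=
    fun ζ hζ => mob_mapsTo hfw (hfm (mob_mapsTo hw hζ))
  have hg0 : g 0 = 0 := by
    have : mob w 0 = w := by simp [mob]
    rw [hg]; simp only []; rw [this, mob_self]
  have hsch := Complex.norm_le_norm_of_mapsTo_ball_self hgd (hgm.mono_right ball_subset_closedBall) hg0
    (z := mob w z) (by simpa [Complex.norm_eq_abs] using mob_mem hw hz)
  rw [hg] at hsch
  simp only [] at hsch
  rw [mob_mob hw hz] at hsch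
  -- hsch : abs (mob (f w) (f z)) ≤ abs (mob w z)
  simp only [Complex.norm_eq_abs] at hsch
  rw [mob, mob, map_div₀, map_div₀] at hsch
  have d1 : Complex.abs (1 - conj (f w) * f z) > 0 := by
    simpa [AbsoluteValue.pos_iff] using den_ne hfw hfz.le
  have d2 : Complex.abs (1 - conj w * z) > 0 := by
    simpa [AbsoluteValue.pos_iff] using den_ne hw hz.le
  rw [div_le_div_iff₀ d1 d2] at hsch
  linarith

/-- The Schwarz–Pick inequality in "invariant" form. -/
lemma sp_key {f : ℂ → ℂ} (hf : DifferentiableOn ℂ f (ball 0 1))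
    (hfm : MapsTo f (ball 0 1) (ball 0 1)) {z w : ℂ}
    (hz : Complex.abs z < 1) (hw : Complex.abs w < 1) :
    (1 - normSq z) * (1 - normSq w) * normSq (1 - conj (f w) * f z) ≤
      (1 - normSq (f z)) * (1 - normSq (f w)) * normSq (1 - conj w * z) := by
  have h := schwarz_pick hf hfm hz hw
  have i1 := normSq_key w z
  have i2 := normSq_key (f w) (f z)
  rw [← sq_abs, ← sq_abs] at i1 i2
  rw [show (1 - normSq z) * (1 - normSq w) = (1 - normSq w) * (1 - normSq z) from mul_comm _ _, ← i1,
    show (1 - normSq (f z)) * (1 - normSq (f w)) = (1 - normSq (f w)) * (1 - normSq (f z)) from mul_comm _ _, ← i2, ← sq_abs, ← sq_abs]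
  nlinarith [mul_le_mul h h (by positivity : (0:ℝ) ≤ Complex.abs (f w - f z) * Complex.abs (1 - conj w * z)) (by positivity : (0:ℝ) ≤ Complex.abs (w - z) * Complex.abs (1 - conj (f w) * f z)),
    sq_nonneg (Complex.abs (1 - conj (f w) * f z)), sq_nonneg (Complex.abs (1 - conj w * z)),
    Complex.abs.nonneg (f w - f z), Complex.abs.nonneg (w - z)]

/-- `1 - |f|² = 2 Re(conj τ (τ - f)) - |τ - f|²` when `|τ| = 1`. -/
lemma one_sub_normSq (τ F : ℂ) (hτ : normSq τ = 1) :
    1 - normSq F = 2 * (conj τ * (τ - F)).re - normSq (τ - F) := by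
  have h1 : normSq (τ - F) = normSq τ + normSq F - 2 * (τ * conj F).re := Complex.normSq_sub τ F
  have h2 : (conj τ * (τ - F)).re = normSq τ - (conj τ * F).re := by
    rw [mul_sub]
    have : conj τ * τ = (normSq τ : ℂ) := by rw [mul_comm, Complex.mul_conj]
    rw [this]
    simp [Complex.sub_re, Complex.ofReal_re]
  have h3 : (τ * conj F).re = (conj τ * F).re := by
    have : conj (τ * conj F) = conj τ * F := by rw [map_mul, Complex.conj_conj]
    rw [← this, Complex.conj_re]
  rw [h2, h1, h3, hτ]
  ring
lemma mem_unitDisc {z : ℂ} : z ∈ unitDisc ↔ Complex.abs z < 1 := by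
  rw [unitDisc, mem_ball_zero_iff, Complex.norm_eq_abs]

/-- the radial path enters every Stolz region -/
lemma radial_tendsto {σ : ℂ} (hσ : Complex.abs σ = 1) {M : ℝ} (hM : 1 < M) :
    Tendsto (fun t : ℝ => (t : ℂ) * σ) (𝓝[<] (1:ℝ)) (𝓝[stolzAt σ M] σ) := by
  rw [tendsto_nhdsWithin_iff]
  constructor
  · have : Tendsto (fun t : ℝ => (t : ℂ) * σ) (𝓝 (1:ℝ)) (𝓝 σ) := by
      have h := (Complex.continuous_ofReal.mul (continuous_const (y := σ))).tendsto (1 : ℝ)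
      simpa [Pi.mul_def] using h
    exact this.mono_left nhdsWithin_le_nhds
  · filter_upwards [Ioo_mem_nhdsLT_of_mem (show (1:ℝ) ∈ Ioc 0 1 by norm_num)] with t ht
    have h1 : Complex.abs ((t:ℂ) * σ) = t := by
      rw [map_mul, hσ, Complex.abs_ofReal, abs_of_pos ht.1, mul_one]
    have h2 : Complex.abs (σ - (t:ℂ)*σ) = 1 - t := by
      have : σ - (t:ℂ)*σ = ((1 - t : ℝ):ℂ) * σ := by push_cast; ring
      rw [this, map_mul, hσ, Complex.abs_ofReal, abs_of_pos (by linarith [ht.2]), mul_one]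
    constructor
    · rw [mem_unitDisc, h1]; exact ht.2
    · rw [Complex.norm_eq_abs, Complex.norm_eq_abs, h1, h2]; nlinarith [ht.2]


set_option maxHeartbeats 2000000 in
/-- if `f : 𝔻 → 𝔻` is holomorphic with finite angular derivative `d` at
`σ ∈ ∂𝔻` and non-tangential limit `τ = f(σ) ∈ ∂𝔻`, then
`∠lim_{ζ→σ} Ω^𝔻_σ(ζ)/Ω^𝔻_τ(f(ζ)) = |f'(σ)|`, where `Ω^𝔻_τ(ζ) = −(1−|ζ|²)/|τ−ζ|²`. -/
theorem stmt9 (f : ℂ → ℂ) (hf : DifferentiableOn ℂ f unitDisc)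
    (hfm : MapsTo f unitDisc unitDisc)
    (σ τ : ℂ) (hσ : ‖σ‖ = 1) (hτ : ‖τ‖ = 1)
    (hlim : NTLim f σ τ)
    (d : ℂ) (hd : NTLim (fun ζ => (τ - f ζ) / (σ - ζ)) σ d) :
    NTLim (fun ζ =>
        (-(1 - ‖ζ‖ ^ 2) / ‖σ - ζ‖ ^ 2) /
        (-(1 - ‖f ζ‖ ^ 2) / ‖τ - f ζ‖ ^ 2))
      σ (‖d‖) := by
  simp only [Complex.norm_eq_abs] at hσ hτ ⊢
  have hnσ : normSq σ = 1 := by rw [← Complex.sq_abs, hσ]; norm_num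
  have hnτ : normSq τ = 1 := by rw [← Complex.sq_abs, hτ]; norm_num
  set q : ℂ → ℂ := fun ζ => (τ - f ζ) / (σ - ζ) with hqdef
  -- radial limits
  have hrad := radial_tendsto hσ (M := 2) one_lt_two
  have hqr : Tendsto (fun t : ℝ => q ((t:ℂ)*σ)) (𝓝[<] (1:ℝ)) (𝓝 d) :=
    (hd 2 one_lt_two).comp hrad
  have hfr : Tendsto (fun t : ℝ => f ((t:ℂ)*σ)) (𝓝[<] (1:ℝ)) (𝓝 τ) :=
    (hlim 2 one_lt_two).comp hrad
  -- elementary facts along the radius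
  have hIoo : ∀ t : ℝ, t ∈ Ioo (0:ℝ) 1 → Complex.abs ((t:ℂ)*σ) = t ∧
      (σ - (t:ℂ)*σ ≠ 0) ∧ normSq (σ - (t:ℂ)*σ) = (1-t)^2 ∧
      τ - f ((t:ℂ)*σ) = q ((t:ℂ)*σ) * (σ - (t:ℂ)*σ) := by
    intro t ht
    have h1 : Complex.abs ((t:ℂ)*σ) = t := by
      rw [map_mul, hσ, Complex.abs_ofReal, abs_of_pos ht.1, mul_one]
    have h2 : Complex.abs (σ - (t:ℂ)*σ) = 1 - t := by
      have : σ - (t:ℂ)*σ = ((1 - t : ℝ):ℂ) * σ := by push_cast; ring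
      rw [this, map_mul, hσ, Complex.abs_ofReal, abs_of_pos (by linarith [ht.2]), mul_one]
    have h3 : σ - (t:ℂ)*σ ≠ 0 := by
      intro h; rw [h, map_zero] at h2; linarith [ht.2]
    refine ⟨h1, h3, ?_, ?_⟩
    · rw [← Complex.sq_abs, h2]
    · rw [hqdef]; exact (div_mul_cancel₀ _ h3).symm
  set g : ℝ → ℝ := fun t => (1 - normSq (f ((t:ℂ)*σ))) / (1 - t^2) with hgdef
  set β : ℝ := (conj τ * σ * d).re with hβdef
  -- radial limit of the Julia quotient
  have hglim : Tendsto g (𝓝[<] (1:ℝ)) (𝓝 β) := by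
    have heq : ∀ᶠ t : ℝ in 𝓝[<] (1:ℝ),
        (2 * (conj τ * σ * q ((t:ℂ)*σ)).re - (1-t) * normSq (q ((t:ℂ)*σ))) / (1 + t) = g t := by
      filter_upwards [Ioo_mem_nhdsLT_of_mem (show (1:ℝ) ∈ Ioc 0 1 by norm_num)] with t ht
      obtain ⟨h1, h3, h4, h5⟩ := hIoo t ht
      have hσt : σ - (t:ℂ)*σ = ((1 - t : ℝ):ℂ) * σ := by push_cast; ring
      have e1 := one_sub_normSq τ (f ((t:ℂ)*σ)) hnτ
      have e2 : (conj τ * (τ - f ((t:ℂ)*σ))).re = (1-t) * (conj τ * σ * q ((t:ℂ)*σ)).re := by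
        rw [h5, hσt, show conj τ * (q ((t:ℂ)*σ) * (((1 - t : ℝ):ℂ) * σ)) =
          ((1-t:ℝ):ℂ) * (conj τ * σ * q ((t:ℂ)*σ)) by push_cast; ring, Complex.re_ofReal_mul]
      have e3 : normSq (τ - f ((t:ℂ)*σ)) = normSq (q ((t:ℂ)*σ)) * (1-t)^2 := by
        rw [h5, normSq_mul, h4]
      have hg1 : g t = (1 - normSq (f ((t:ℂ)*σ))) / (1 - t^2) := rfl
      have ht1 : (1:ℝ) - t ≠ 0 := by linarith [ht.2]
      have ht2 : (1:ℝ) + t ≠ 0 := by linarith [ht.1]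
      set X := (conj τ * σ * q ((t:ℂ)*σ)).re with hX
      set Y := normSq (q ((t:ℂ)*σ)) with hY
      rw [hg1, e1, e2, e3, show (1:ℝ) - t^2 = (1-t)*(1+t) by ring]
      field_simp
    refine Tendsto.congr' heq ?_
    have hq1 : Tendsto (fun t : ℝ => conj τ * σ * q ((t:ℂ)*σ)) (𝓝[<] (1:ℝ))
        (𝓝 (conj τ * σ * d)) := hqr.const_mul _
    have hq2 : Tendsto (fun t : ℝ => (conj τ * σ * q ((t:ℂ)*σ)).re) (𝓝[<] (1:ℝ)) (𝓝 β) :=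
      (Complex.continuous_re.tendsto _).comp hq1
    have hq3 : Tendsto (fun t : ℝ => normSq (q ((t:ℂ)*σ))) (𝓝[<] (1:ℝ)) (𝓝 (normSq d)) :=
      (Complex.continuous_normSq.tendsto _).comp hqr
    have ht0 : Tendsto (fun t : ℝ => 1 - t) (𝓝[<] (1:ℝ)) (𝓝 0) := by
      have h : Tendsto (fun t : ℝ => 1 - t) (𝓝 (1:ℝ)) (𝓝 (1-1)) :=
        tendsto_const_nhds.sub tendsto_id
      simpa using h.mono_left nhdsWithin_le_nhds
    have ht2 : Tendsto (fun t : ℝ => 1 + t) (𝓝[<] (1:ℝ)) (𝓝 2) := by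
      have h : Tendsto (fun t : ℝ => 1 + t) (𝓝 (1:ℝ)) (𝓝 (1+1)) :=
        tendsto_const_nhds.add tendsto_id
      have h2 := h.mono_left (nhdsWithin_le_nhds (s := Iio (1:ℝ)))
      norm_num at h2
      exact h2
    have := ((hq2.const_mul 2).sub (ht0.mul hq3)).div ht2 two_ne_zero
    have hv : (2 * β - 0 * normSq d) / (2:ℝ) = β := by ring
    rwa [hv] at this
  -- positive lower bound
  have hβpos : 0 < β := by
    have hf0 : Complex.abs (f 0) < 1 := by
      have h0 : (0:ℂ) ∈ unitDisc := by rw [mem_unitDisc]; simp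
      exact mem_unitDisc.mp (hfm h0)
    set a := Complex.abs (f 0) with hadef
    have ha0 : 0 ≤ a := Complex.abs.nonneg _
    have hglb : ∀ᶠ t : ℝ in 𝓝[<] (1:ℝ), (1-a)/(1+a) ≤ g t := by
      filter_upwards [Ioo_mem_nhdsLT_of_mem (show (1:ℝ) ∈ Ioc 0 1 by norm_num)] with t ht
      obtain ⟨h1, h3, h4, h5⟩ := hIoo t ht
      have hzlt : Complex.abs ((t:ℂ)*σ) < 1 := by rw [h1]; exact ht.2
      have key := sp_key hf hfm (z := (t:ℂ)*σ) (w := 0) hzlt (by simp)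
      simp only [map_zero, normSq_zero, zero_mul, sub_zero, mul_one, normSq_one] at key
      -- key : (1 - normSq (tσ)) * (1 - 0) * normSq (1 - conj (f 0) * f (tσ)) ≤ ...
      have hns : normSq ((t:ℂ)*σ) = t^2 := by rw [← Complex.sq_abs, h1]
      have hfa : Complex.abs (f ((t:ℂ)*σ)) ≤ 1 := by
        have := mem_unitDisc.mp (hfm (mem_unitDisc.mpr hzlt))
        linarith
      have hlb : 1 - a ≤ Complex.abs (1 - conj (f 0) * f ((t:ℂ)*σ)) := by
        have htri := Complex.abs.add_le (1 - conj (f 0) * f ((t:ℂ)*σ)) (conj (f 0) * f ((t:ℂ)*σ))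
        simp only [sub_add_cancel, map_one] at htri
        have hx : Complex.abs (conj (f 0) * f ((t:ℂ)*σ)) ≤ a := by
          rw [map_mul, abs_conj]
          nlinarith [Complex.abs.nonneg (f ((t:ℂ)*σ))]
        linarith
      have hnq1x : (1-a)^2 ≤ normSq (1 - conj (f 0) * f ((t:ℂ)*σ)) := by
        rw [← Complex.sq_abs]
        nlinarith [hf0, Complex.abs.nonneg (1 - conj (f 0) * f ((t:ℂ)*σ))]
      have hfns : normSq (f 0) = a^2 := by rw [← Complex.sq_abs]
      have hg1 : g t = (1 - normSq (f ((t:ℂ)*σ))) / (1 - t^2) := rfl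
      rw [hg1, div_le_div_iff₀ (by positivity) (by nlinarith [ht.1, ht.2])]
      rw [hns, hfns] at key
      have h1a : (0:ℝ) < 1 - a := by linarith
      have h1t : (0:ℝ) < 1 - t^2 := by nlinarith [ht.1, ht.2]
      have step1 : (1-t^2)*(1-a)^2 ≤ (1 - normSq (f ((t:ℂ)*σ)))*(1-a^2) :=
        le_trans (mul_le_mul_of_nonneg_left hnq1x h1t.le) key
      nlinarith [step1, h1a, h1t]
    have hble : (1-a)/(1+a) ≤ β := le_of_tendsto_of_tendsto tendsto_const_nhds hglim hglb
    have : 0 < (1-a)/(1+a) := div_pos (by linarith) (by linarith)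
    linarith
  -- Julia's inequality
  have hτ1 : conj τ * τ = 1 := by
    rw [mul_comm, Complex.mul_conj, hnτ]; norm_num
  have hσ1 : conj σ * σ = 1 := by
    rw [mul_comm, Complex.mul_conj, hnσ]; norm_num
  have hJ : ∀ z : ℂ, Complex.abs z < 1 →
      (1 - normSq z) * normSq (τ - f z) ≤ (1 - normSq (f z)) * (β * normSq (σ - z)) := by
    intro z hz
    have hev : ∀ᶠ t : ℝ in 𝓝[<] (1:ℝ),
        (1 - normSq z) * normSq (1 - conj (f ((t:ℂ)*σ)) * f z) ≤
        (1 - normSq (f z)) * (g t * normSq (1 - ((t:ℂ) * conj σ) * z)) := by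
      filter_upwards [Ioo_mem_nhdsLT_of_mem (show (1:ℝ) ∈ Ioc 0 1 by norm_num)] with t ht
      obtain ⟨h1, h3, h4, h5⟩ := hIoo t ht
      have hzlt : Complex.abs ((t:ℂ)*σ) < 1 := by rw [h1]; exact ht.2
      have key := sp_key hf hfm (z := z) (w := (t:ℂ)*σ) hz hzlt
      have hns : normSq ((t:ℂ)*σ) = t^2 := by rw [← Complex.sq_abs, h1]
      have hcj : conj ((t:ℂ)*σ) = (t:ℂ) * conj σ := by
        rw [map_mul, Complex.conj_ofReal]
      rw [hns, hcj] at key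
      have h1t : (0:ℝ) < 1 - t^2 := by nlinarith [ht.1, ht.2]
      have hg1 : g t = (1 - normSq (f ((t:ℂ)*σ))) / (1 - t^2) := rfl
      rw [hg1, div_mul_eq_mul_div, ← mul_div_assoc, le_div_iff₀ h1t]
      nlinarith [key]
    have cont : Continuous fun u : ℂ => (1 - normSq z) * normSq (1 - conj u * f z) :=
      continuous_const.mul (Complex.continuous_normSq.comp
        (continuous_const.sub (Complex.continuous_conj.mul continuous_const)))
    have hL : Tendsto (fun t : ℝ => (1 - normSq z) * normSq (1 - conj (f ((t:ℂ)*σ)) * f z))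
        (𝓝[<] (1:ℝ)) (𝓝 ((1 - normSq z) * normSq (1 - conj τ * f z))) :=
      (cont.tendsto τ).comp hfr
    have cont2 : Continuous fun t : ℝ => normSq (1 - ((t:ℂ) * conj σ) * z) := by
      continuity
    have hZ : Tendsto (fun t : ℝ => normSq (1 - ((t:ℂ) * conj σ) * z)) (𝓝[<] (1:ℝ))
        (𝓝 (normSq (1 - conj σ * z))) := by
      have h := (cont2.tendsto 1).mono_left (nhdsWithin_le_nhds (s := Iio (1:ℝ)))
      simpa using h
    have hRt : Tendsto (fun t : ℝ => (1 - normSq (f z)) * (g t * normSq (1 - ((t:ℂ) * conj σ) * z)))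
        (𝓝[<] (1:ℝ)) (𝓝 ((1 - normSq (f z)) * (β * normSq (1 - conj σ * z)))) :=
      (hglim.mul hZ).const_mul _
    have hle := le_of_tendsto_of_tendsto hL hRt hev
    have eτ : (1:ℂ) - conj τ * f z = conj τ * (τ - f z) := by rw [mul_sub, hτ1]
    have eσ : (1:ℂ) - conj σ * z = conj σ * (σ - z) := by rw [mul_sub, hσ1]
    rw [eτ, eσ, normSq_mul, normSq_conj, hnτ, one_mul, normSq_mul, normSq_conj, hnσ, one_mul] at hle
    exact hle
  -- β ≤ |d|
  have ht2' : Tendsto (fun t : ℝ => 1 + t) (𝓝[<] (1:ℝ)) (𝓝 2) := by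
    have h : Tendsto (fun t : ℝ => 1 + t) (𝓝 (1:ℝ)) (𝓝 (1+1)) :=
      tendsto_const_nhds.add tendsto_id
    have h2 := h.mono_left (nhdsWithin_le_nhds (s := Iio (1:ℝ)))
    norm_num at h2
    exact h2
  have habsqr : Tendsto (fun t : ℝ => Complex.abs (q ((t:ℂ)*σ))) (𝓝[<] (1:ℝ))
      (𝓝 (Complex.abs d)) := (Complex.continuous_abs.tendsto d).comp hqr
  have hnq3 : Tendsto (fun t : ℝ => normSq (q ((t:ℂ)*σ))) (𝓝[<] (1:ℝ)) (𝓝 (normSq d)) :=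
    (Complex.continuous_normSq.tendsto d).comp hqr
  have hβled : β ≤ Complex.abs d := by
    have hev : ∀ᶠ t : ℝ in 𝓝[<] (1:ℝ), g t ≤ 2 * Complex.abs (q ((t:ℂ)*σ)) / (1 + t) := by
      filter_upwards [Ioo_mem_nhdsLT_of_mem (show (1:ℝ) ∈ Ioc 0 1 by norm_num)] with t ht
      obtain ⟨h1, h3, h4, h5⟩ := hIoo t ht
      have hfa : Complex.abs (f ((t:ℂ)*σ)) ≤ 1 :=
        le_of_lt (mem_unitDisc.mp (hfm (mem_unitDisc.mpr (by rw [h1]; exact ht.2))))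
      have htri : 1 - Complex.abs (f ((t:ℂ)*σ)) ≤ Complex.abs (τ - f ((t:ℂ)*σ)) := by
        have h := Complex.abs.add_le (τ - f ((t:ℂ)*σ)) (f ((t:ℂ)*σ))
        rw [sub_add_cancel, hτ] at h
        linarith
      have h2abs : Complex.abs (σ - (t:ℂ)*σ) = 1 - t := by
        rw [show σ - (t:ℂ)*σ = ((1-t:ℝ):ℂ)*σ by push_cast; ring, map_mul, hσ,
          Complex.abs_ofReal, abs_of_pos (by linarith [ht.2]), mul_one]
      have habsq : Complex.abs (τ - f ((t:ℂ)*σ)) = Complex.abs (q ((t:ℂ)*σ)) * (1 - t) := by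
        rw [h5, map_mul, h2abs]
      have hnsf : normSq (f ((t:ℂ)*σ)) = Complex.abs (f ((t:ℂ)*σ))^2 :=
        (Complex.sq_abs _).symm
      have hnum : 1 - normSq (f ((t:ℂ)*σ)) ≤ 2 * (Complex.abs (q ((t:ℂ)*σ)) * (1-t)) := by
        rw [hnsf]
        nlinarith [htri, hfa, Complex.abs.nonneg (f ((t:ℂ)*σ)), habsq]
      have hg1 : g t = (1 - normSq (f ((t:ℂ)*σ))) / (1 - t^2) := rfl
      have h1t : (0:ℝ) < 1 - t^2 := by nlinarith [ht.1, ht.2]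
      have h1pt : (0:ℝ) < 1 + t := by linarith [ht.1]
      rw [hg1, div_le_div_iff₀ h1t h1pt]
      nlinarith [hnum, h1pt, ht.1, ht.2]
    have hlimr : Tendsto (fun t : ℝ => 2 * Complex.abs (q ((t:ℂ)*σ)) / (1 + t)) (𝓝[<] (1:ℝ))
        (𝓝 (2 * Complex.abs d / 2)) := (habsqr.const_mul 2).div ht2' two_ne_zero
    have h := le_of_tendsto_of_tendsto hglim hlimr hev
    linarith
  -- |d|² ≤ β²
  have hd2 : normSq d ≤ β * β := by
    have hev : ∀ᶠ t : ℝ in 𝓝[<] (1:ℝ), normSq (q ((t:ℂ)*σ)) ≤ β * g t := by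
      filter_upwards [Ioo_mem_nhdsLT_of_mem (show (1:ℝ) ∈ Ioc 0 1 by norm_num)] with t ht
      obtain ⟨h1, h3, h4, h5⟩ := hIoo t ht
      have hzlt : Complex.abs ((t:ℂ)*σ) < 1 := by rw [h1]; exact ht.2
      have hj := hJ ((t:ℂ)*σ) hzlt
      have hns : normSq ((t:ℂ)*σ) = t^2 := by rw [← Complex.sq_abs, h1]
      rw [h5, hns, normSq_mul, h4] at hj
      have h1t : (0:ℝ) < 1 - t^2 := by nlinarith [ht.1, ht.2]
      have h1t' : (0:ℝ) < (1-t)^2 := pow_pos (by linarith [ht.2]) 2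
      have hg1 : g t = (1 - normSq (f ((t:ℂ)*σ))) / (1 - t^2) := rfl
      rw [hg1, ← mul_div_assoc, le_div_iff₀ h1t]
      nlinarith [hj, h1t, h1t']
    exact le_of_tendsto_of_tendsto hnq3 (hglim.const_mul β) hev
  -- conclude that conj τ * σ * d is real positive, equal to |d| = β
  have habsd : Complex.abs d = β := by
    have h1 : β ≤ Complex.abs d := hβled
    have h2 : Complex.abs d ^ 2 ≤ β ^ 2 := by rw [Complex.sq_abs]; nlinarith
    nlinarith [Complex.abs.nonneg d]
  have hc : conj τ * σ * d = ((Complex.abs d : ℝ) : ℂ) := by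
    have habs : Complex.abs (conj τ * σ * d) = Complex.abs d := by
      rw [map_mul, map_mul, abs_conj, hτ, hσ]; ring
    have hre : (conj τ * σ * d).re = Complex.abs d := by rw [← hβdef, habsd]
    have him : (conj τ * σ * d).im = 0 := by
      have h1 := Complex.sq_abs (conj τ * σ * d)
      rw [habs] at h1
      have h2 : normSq (conj τ * σ * d) = (conj τ * σ * d).re^2 + (conj τ * σ * d).im^2 := by
        rw [normSq_apply]; ring
      nlinarith [sq_nonneg ((conj τ * σ * d).im)]
    exact Complex.ext (by simpa using hre) (by simpa using him)
  have hdpos : 0 < Complex.abs d := by rw [habsd]; exact hβpos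
  -- the main non-tangential limit of the Julia quotient
  set R : ℂ → ℝ := fun ζ => (1 - normSq (f ζ)) / (1 - normSq ζ) with hRdef
  intro M hM
  have hqM : Tendsto q (𝓝[stolzAt σ M] σ) (𝓝 d) := hd M hM
  have hRlim : Tendsto R (𝓝[stolzAt σ M] σ) (𝓝 (Complex.abs d)) := by
    set Bnd : ℂ → ℝ := fun ζ =>
      M * (2 * Complex.abs (σ * conj τ * q ζ - ((Complex.abs d : ℝ):ℂ))
        + |normSq (q ζ) - Complex.abs d| * Complex.abs (σ - ζ)) with hBnddef
    have hBnd0 : Tendsto Bnd (𝓝[stolzAt σ M] σ) (𝓝 0) := by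
      have hq1 : Tendsto (fun ζ => σ * conj τ * q ζ) (𝓝[stolzAt σ M] σ)
          (𝓝 (σ * conj τ * d)) := hqM.const_mul _
      have hcc : σ * conj τ * d = ((Complex.abs d : ℝ):ℂ) := by rw [← hc]; ring
      have habs1 : Tendsto (fun ζ => Complex.abs (σ * conj τ * q ζ - ((Complex.abs d : ℝ):ℂ)))
          (𝓝[stolzAt σ M] σ) (𝓝 0) := by
        have h2 := hq1.sub_const (((Complex.abs d : ℝ):ℂ))
        rw [hcc, sub_self] at h2
        have := (Complex.continuous_abs.tendsto 0).comp h2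
        simpa [Function.comp_def] using this
      have habs2 : Tendsto (fun ζ => Complex.abs (σ - ζ)) (𝓝[stolzAt σ M] σ) (𝓝 0) := by
        have hcont := (Complex.continuous_abs.comp ((continuous_const (y := σ)).sub continuous_id)).tendsto σ
        have := hcont.mono_left (nhdsWithin_le_nhds (s := stolzAt σ M))
        simpa [Function.comp_def, Pi.sub_def] using this
      have habs3 : Tendsto (fun ζ => |normSq (q ζ) - Complex.abs d|) (𝓝[stolzAt σ M] σ)
          (𝓝 (|normSq d - Complex.abs d|)) :=
        (((Complex.continuous_normSq.tendsto d).comp hqM).sub_const (Complex.abs d)).abs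
      have hfin := ((habs1.const_mul 2).add (habs3.mul habs2)).const_mul M
      simpa using hfin
    have hpt : ∀ᶠ ζ in 𝓝[stolzAt σ M] σ, ‖R ζ - Complex.abs d‖ ≤ Bnd ζ := by
      filter_upwards [self_mem_nhdsWithin] with ζ hζ
      obtain ⟨hζD, hζS⟩ := hζ
      simp only [Complex.norm_eq_abs] at hζS
      have haζ : Complex.abs ζ < 1 := mem_unitDisc.mp hζD
      have hDpos : 0 < 1 - normSq ζ := by
        rw [← Complex.sq_abs]; nlinarith [Complex.abs.nonneg ζ]
      have hσζ : σ - ζ ≠ 0 := sub_ne_zero.mpr (by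
        intro h; exact (ne_of_lt haζ) (by rw [← h]; exact hσ))
      have hqe : τ - f ζ = q ζ * (σ - ζ) := (div_mul_cancel₀ (τ - f ζ) hσζ).symm
      have e1 := one_sub_normSq τ (f ζ) hnτ
      have e2 := one_sub_normSq σ ζ hnσ
      set E : ℂ := (conj τ * q ζ - ((Complex.abs d : ℝ):ℂ) * conj σ) * (σ - ζ) with hEdef
      have e3 : (conj τ * (τ - f ζ)).re - Complex.abs d * ((conj σ * (σ - ζ)).re) = E.re := by
        rw [hqe, hEdef,
          show (conj τ * (q ζ * (σ - ζ)) : ℂ) = conj τ * q ζ * (σ - ζ) by ring,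
          ← Complex.re_ofReal_mul, ← Complex.sub_re]
        congr 1
        ring
      have e4 : normSq (τ - f ζ) = normSq (q ζ) * normSq (σ - ζ) := by rw [hqe, normSq_mul]
      have key : (1 - normSq (f ζ)) - Complex.abs d * (1 - normSq ζ)
          = 2 * E.re - (normSq (q ζ) - Complex.abs d) * normSq (σ - ζ) := by
        rw [e1, e2, e4]
        linear_combination (2:ℝ) * e3
      have hσσ : σ * conj σ = 1 := by rw [Complex.mul_conj, hnσ]; norm_num
      have hmul : σ * (conj τ * q ζ - ((Complex.abs d:ℝ):ℂ) * conj σ)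
          = σ * conj τ * q ζ - ((Complex.abs d:ℝ):ℂ) := by
        linear_combination -(((Complex.abs d:ℝ):ℂ)) * hσσ
      have hEabs : Complex.abs E
          = Complex.abs (σ * conj τ * q ζ - ((Complex.abs d:ℝ):ℂ)) * Complex.abs (σ - ζ) := by
        rw [hEdef, map_mul]
        congr 1
        rw [← one_mul (Complex.abs (conj τ * q ζ - ((Complex.abs d:ℝ):ℂ) * conj σ)), ← hσ,
          ← map_mul, hmul]
      have hEbound : |E.re| ≤ Complex.abs (σ * conj τ * q ζ - ((Complex.abs d:ℝ):ℂ))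
          * Complex.abs (σ - ζ) := by
        rw [← hEabs]; exact Complex.abs_re_le_abs E
      have hnq : normSq (σ - ζ) = Complex.abs (σ - ζ)^2 := (Complex.sq_abs _).symm
      have hMD : Complex.abs (σ - ζ) ≤ M * (1 - normSq ζ) := by
        have h2 : 1 - Complex.abs ζ ≤ 1 - normSq ζ := by
          rw [← Complex.sq_abs]; nlinarith [Complex.abs.nonneg ζ]
        nlinarith [hζS, hM]
      have hRval : R ζ - Complex.abs d
          = ((1 - normSq (f ζ)) - Complex.abs d * (1 - normSq ζ)) / (1 - normSq ζ) := by
        rw [hRdef]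
        field_simp
      rw [Real.norm_eq_abs, hRval, abs_div, abs_of_pos hDpos, div_le_iff₀ hDpos]
      have htri : |2 * E.re - (normSq (q ζ) - Complex.abs d) * normSq (σ - ζ)|
          ≤ |2 * E.re| + |(normSq (q ζ) - Complex.abs d) * normSq (σ - ζ)| := by
        have h := abs_sub_le (2 * E.re) 0 ((normSq (q ζ) - Complex.abs d) * normSq (σ - ζ))
        simpa using h
      have hnum : |(1 - normSq (f ζ)) - Complex.abs d * (1 - normSq ζ)| ≤
          (2 * Complex.abs (σ * conj τ * q ζ - ((Complex.abs d:ℝ):ℂ))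
            + |normSq (q ζ) - Complex.abs d| * Complex.abs (σ - ζ)) * Complex.abs (σ - ζ) := by
        rw [key]
        have h2 : |2 * E.re| = 2 * |E.re| := by rw [abs_mul]; norm_num
        have h3 : |(normSq (q ζ) - Complex.abs d) * normSq (σ - ζ)|
            = |normSq (q ζ) - Complex.abs d| * normSq (σ - ζ) := by
          rw [abs_mul, _root_.abs_of_nonneg (normSq_nonneg _)]
        rw [h2, h3] at htri
        have hs0 : 0 ≤ Complex.abs (σ - ζ) := Complex.abs.nonneg _
        nlinarith [htri, hEbound, abs_nonneg (normSq (q ζ) - Complex.abs d), hnq]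
      calc |(1 - normSq (f ζ)) - Complex.abs d * (1 - normSq ζ)|
          ≤ (2 * Complex.abs (σ * conj τ * q ζ - ((Complex.abs d:ℝ):ℂ))
            + |normSq (q ζ) - Complex.abs d| * Complex.abs (σ - ζ)) * Complex.abs (σ - ζ) := hnum
        _ ≤ (2 * Complex.abs (σ * conj τ * q ζ - ((Complex.abs d:ℝ):ℂ))
            + |normSq (q ζ) - Complex.abs d| * Complex.abs (σ - ζ)) * (M * (1 - normSq ζ)) := by
            apply mul_le_mul_of_nonneg_left hMD
            positivity
        _ = Bnd ζ * (1 - normSq ζ) := by rw [hBnddef]; ring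
    have h0 := squeeze_zero_norm' hpt hBnd0
    have hfin := h0.add_const (Complex.abs d)
    have heq : (fun ζ => (R ζ - Complex.abs d) + Complex.abs d) = R := by
      funext ζ; ring
    rw [heq, zero_add] at hfin
    exact hfin
  -- final assembly
  have habsq : Tendsto (fun ζ => (Complex.abs (q ζ))^2) (𝓝[stolzAt σ M] σ)
      (𝓝 ((Complex.abs d)^2)) := (((Complex.continuous_abs.tendsto d).comp hqM).pow 2)
  have hdiv : Tendsto (fun ζ => (Complex.abs (q ζ))^2 / R ζ) (𝓝[stolzAt σ M] σ)
      (𝓝 ((Complex.abs d)^2 / Complex.abs d)) := habsq.div hRlim hdpos.ne'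
  have hval : (Complex.abs d)^2 / Complex.abs d = Complex.abs d := by
    field_simp
  rw [hval] at hdiv
  refine hdiv.congr' ?_
  filter_upwards [self_mem_nhdsWithin] with ζ hζ
  obtain ⟨hζD, hζS⟩ := hζ
  have haζ : Complex.abs ζ < 1 := mem_unitDisc.mp hζD
  have hafζ : Complex.abs (f ζ) < 1 := mem_unitDisc.mp (hfm hζD)
  have hσζ : σ - ζ ≠ 0 := sub_ne_zero.mpr (by
    intro h; exact (ne_of_lt haζ) (by rw [← h]; exact hσ))
  have hτfζ : τ - f ζ ≠ 0 := sub_ne_zero.mpr (by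
    intro h; exact (ne_of_lt hafζ) (by rw [← h]; exact hτ))
  have hs : Complex.abs (σ - ζ) ≠ 0 := Complex.abs.ne_zero hσζ
  have hu : Complex.abs (τ - f ζ) ≠ 0 := Complex.abs.ne_zero hτfζ
  have hA1 : 1 - Complex.abs ζ^2 ≠ 0 := by
    have : 0 < 1 - Complex.abs ζ^2 := by nlinarith [Complex.abs.nonneg ζ]
    exact this.ne'
  have hA3 : 1 - Complex.abs (f ζ)^2 ≠ 0 := by
    have : 0 < 1 - Complex.abs (f ζ)^2 := by nlinarith [Complex.abs.nonneg (f ζ)]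
    exact this.ne'
  have hqabs : Complex.abs (q ζ) = Complex.abs (τ - f ζ) / Complex.abs (σ - ζ) :=
    map_div₀ Complex.abs _ _
  have hRζ : R ζ = (1 - Complex.abs (f ζ)^2)/(1 - Complex.abs ζ^2) := by
    simp only [hRdef, ← Complex.sq_abs]
  rw [hqabs, hRζ]
  have hfac : -Complex.abs (σ - ζ)^2 + Complex.abs (σ - ζ)^2 * Complex.abs (f ζ)^2 ≠ 0 := by
    have he : -Complex.abs (σ - ζ)^2 + Complex.abs (σ - ζ)^2 * Complex.abs (f ζ)^2
        = -(Complex.abs (σ - ζ)^2 * (1 - Complex.abs (f ζ)^2)) := by ring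
    rw [he]
    exact neg_ne_zero.mpr (mul_ne_zero (pow_ne_zero 2 hs) hA3)
  field_simp
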